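/- arXiv:1910.11826 — 3 statements merged into one kernel-verified Lean document; each statement's English description precedes it below -/
import Mathlib

section
/- Let P ⊂ ℝ² be a finite point cloud, p ∈ ℕ*, 𝐱 = [x_1,…,x_{n+p+1}] a (p+1)-regular knot vector with boundary knots x_{p+1} = a and x_{n+1} = b, and w_t : ℝ → [0,∞) a family of weight functions with Σ_{(x,y)∈P} w_{ξ^{(i)}}(x) > 0 for every knot average ξ^{(i)}. Fix μ with p+1 ≤ μ ≤ n and suppose x ∈ [x_μ, x_{μ+1}). Let P_μ := ⋃_{i=μ−p}^{μ} { (x,y) ∈ P : w_{ξ^{(i)}}(x) ≠ 0 }. Then α(μ) ≤ f_w(x) ≤ β(μ), where α(μ) := min{ y : (x,y) ∈ P_μ } and β(μ) := max{ y : (x,y) ∈ P_μ }, and in particular α(μ), β(μ) ∈ [y_min, y_max] whenever y_min ≤ y ≤ y_max for all (x,y) ∈ P. -/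
/-- Univariate B-spline of degree `p` with local knot vector `t i, …, t (i+p+1)`,
defined by the Cox–de Boor recursion (with the convention `0/0 = 0`, which is
automatic for real division in Lean). -/
noncomputable def Bspline (t : ℕ → ℝ) : ℕ → ℕ → ℝ → ℝ
  | 0, i, x => if t i ≤ x ∧ x < t (i + 1) then 1 else 0
  | p + 1, i, x =>
      (x - t i) / (t (i + p + 1) - t i) * Bspline t p i x +
        (t (i + p + 2) - x) / (t (i + p + 2) - t (i + 1)) * Bspline t p (i + 1) x

/-- The `i`-th knot average `ξ⁽ⁱ⁾ = (t_{i+1} + … + t_{i+p}) / p`. -/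
noncomputable def knotAvg (t : ℕ → ℝ) (p i : ℕ) : ℝ :=
  (∑ j ∈ Finset.Icc (i + 1) (i + p), t j) / p

/-- Control point estimator `ŷ_w(u)` of a point cloud `P ⊂ ℝ²` with weight family `w`. -/
noncomputable def ctrlEst (P : Finset (ℝ × ℝ)) (w : ℝ → ℝ → ℝ) (u : ℝ) : ℝ :=
  (∑ q ∈ P, q.2 * w u q.1) / (∑ q ∈ P, w u q.1)

/-- The weighted quasi-interpolant spline approximation (wQISA) of degree `p`
to the point cloud `P` over the knot vector `t` (with knots indexed `1, …, n+p+1`). -/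
noncomputable def wQISA (P : Finset (ℝ × ℝ)) (p n : ℕ) (t : ℕ → ℝ) (w : ℝ → ℝ → ℝ)
    (x : ℝ) : ℝ :=
  ∑ i ∈ Finset.Icc 1 n, ctrlEst P w (knotAvg t p i) * Bspline t p i x

/-- The set of `y`-values of the points of `P` that lie in
`P_μ = ⋃_{i=μ-p}^{μ} { (x,y) ∈ P : w_{ξ⁽ⁱ⁾}(x) ≠ 0 }`. -/
def PmuY (P : Finset (ℝ × ℝ)) (t : ℕ → ℝ) (w : ℝ → ℝ → ℝ) (p μ : ℕ) : Set ℝ :=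
  {y | ∃ x', (x', y) ∈ P ∧ ∃ i, μ - p ≤ i ∧ i ≤ μ ∧ w (knotAvg t p i) x' ≠ 0}

lemma Bspline_zero_def (t : ℕ → ℝ) (i : ℕ) (x : ℝ) :
    Bspline t 0 i x = if t i ≤ x ∧ x < t (i + 1) then 1 else 0 := rfl

lemma Bspline_succ (t : ℕ → ℝ) (p i : ℕ) (x : ℝ) :
    Bspline t (p + 1) i x =
      (x - t i) / (t (i + p + 1) - t i) * Bspline t p i x +
        (t (i + p + 2) - x) / (t (i + p + 2) - t (i + 1)) * Bspline t p (i + 1) x := rfl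

lemma Bspline_congr (t t' : ℕ → ℝ) (p : ℕ) :
    ∀ (i : ℕ), (∀ j, i ≤ j → j ≤ i + p + 1 → t j = t' j) → ∀ x : ℝ,
      Bspline t p i x = Bspline t' p i x := by
  induction p with
  | zero =>
    intro i h x
    rw [Bspline_zero_def, Bspline_zero_def, h i le_rfl (by omega),
      h (i + 1) (by omega) (by omega)]
  | succ p IH =>
    intro i h x
    rw [Bspline_succ, Bspline_succ,
      IH i (fun j h1 h2 => h j h1 (by omega)) x,
      IH (i + 1) (fun j h1 h2 => h j (by omega) (by omega)) x,
      h i le_rfl (by omega), h (i + 1) (by omega) (by omega),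
      h (i + p + 1) (by omega) (by omega), h (i + p + 2) (by omega) (by omega)]

lemma Bspline_zero_left (t : ℕ → ℝ) (ht : ∀ j, t j ≤ t (j + 1)) (p : ℕ) :
    ∀ (i : ℕ) (x : ℝ), x < t i → Bspline t p i x = 0 := by
  induction p with
  | zero =>
    intro i x h
    rw [Bspline_zero_def, if_neg (fun hc => absurd hc.1 (not_le.2 h))]
  | succ p IH =>
    intro i x h
    rw [Bspline_succ, IH i x h, IH (i + 1) x (h.trans_le (ht i)), mul_zero, mul_zero,
      add_zero]

lemma Bspline_zero_right (t : ℕ → ℝ) (ht : ∀ j, t j ≤ t (j + 1)) (p : ℕ) :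
    ∀ (i : ℕ) (x : ℝ), t (i + p + 1) ≤ x → Bspline t p i x = 0 := by
  induction p with
  | zero =>
    intro i x h
    rw [Bspline_zero_def, if_neg (fun hc => absurd hc.2 (not_lt.2 h))]
  | succ p IH =>
    intro i x h
    rw [Bspline_succ, IH i x ((ht (i + p + 1)).trans h),
      IH (i + 1) x (by rw [show i + 1 + p + 1 = i + p + 2 from by omega]; exact h),
      mul_zero, mul_zero, add_zero]

lemma Bspline_nonneg (t : ℕ → ℝ) (ht : ∀ j, t j ≤ t (j + 1)) (p : ℕ) :
    ∀ (i : ℕ) (x : ℝ), 0 ≤ Bspline t p i x := by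
  have hmt : Monotone t := monotone_nat_of_le_succ ht
  induction p with
  | zero =>
    intro i x
    rw [Bspline_zero_def]
    split <;> norm_num
  | succ p IH =>
    intro i x
    rw [Bspline_succ]
    apply add_nonneg
    · rcases le_or_gt (t (i + p + 1)) x with h | h
      · rw [Bspline_zero_right t ht p i x h, mul_zero]
      · rcases lt_or_ge x (t i) with h' | h'
        · rw [Bspline_zero_left t ht p i x h', mul_zero]
        · exact mul_nonneg (div_nonneg (by linarith) (by linarith)) (IH i x)
    · rcases lt_or_ge x (t (i + 1)) with h | h
      · rw [Bspline_zero_left t ht p (i + 1) x h, mul_zero]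
      · rcases le_or_gt (t (i + p + 2)) x with h' | h'
        · rw [Bspline_zero_right t ht p (i + 1) x
            (by rw [show i + 1 + p + 1 = i + p + 2 from by omega]; exact h'), mul_zero]
        · exact mul_nonneg (div_nonneg (by linarith) (by linarith)) (IH (i + 1) x)

lemma sum_Icc_shift (ν m : ℕ) (f : ℕ → ℝ) :
    ∑ i ∈ Finset.Icc ν (ν + m), f i = ∑ k ∈ Finset.range (m + 1), f (ν + k) := by
  rw [← Finset.Ico_add_one_right_eq_Icc, Finset.sum_Ico_eq_sum_range,
    show ν + m + 1 - ν = m + 1 from by omega]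

lemma Bspline_partition (t : ℕ → ℝ) (ht : ∀ j, t j ≤ t (j + 1)) (p : ℕ) :
    ∀ (ν : ℕ) (x : ℝ), t (ν + p) ≤ x → x < t (ν + p + 1) →
      ∑ i ∈ Finset.Icc ν (ν + p), Bspline t p i x = 1 := by
  have hmt : Monotone t := monotone_nat_of_le_succ ht
  induction p with
  | zero =>
    intro ν x h1 h2
    rw [Nat.add_zero] at *
    rw [Finset.Icc_self, Finset.sum_singleton, Bspline_zero_def, if_pos ⟨h1, h2⟩]
  | succ p IH =>
    intro ν x h1 h2
    rw [sum_Icc_shift]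
    have expand : ∀ k, Bspline t (p + 1) (ν + k) x =
        (x - t (ν + k)) / (t (ν + k + p + 1) - t (ν + k)) * Bspline t p (ν + k) x +
        (t (ν + k + p + 2) - x) / (t (ν + k + p + 2) - t (ν + k + 1)) *
          Bspline t p (ν + k + 1) x := fun k => rfl
    calc ∑ k ∈ Finset.range (p + 1 + 1), Bspline t (p + 1) (ν + k) x
        = (∑ k ∈ Finset.range (p + 2),
            (x - t (ν + k)) / (t (ν + k + p + 1) - t (ν + k)) * Bspline t p (ν + k) x) +
          ∑ k ∈ Finset.range (p + 2),
            (t (ν + k + p + 2) - x) / (t (ν + k + p + 2) - t (ν + k + 1)) *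
              Bspline t p (ν + k + 1) x := by
          rw [← Finset.sum_add_distrib]
          exact Finset.sum_congr rfl (fun k _ => expand k)
      _ = (∑ k ∈ Finset.range (p + 1),
            (x - t (ν + k + 1)) / (t (ν + k + p + 2) - t (ν + k + 1)) *
              Bspline t p (ν + k + 1) x) +
          ∑ k ∈ Finset.range (p + 1),
            (t (ν + k + p + 2) - x) / (t (ν + k + p + 2) - t (ν + k + 1)) *
              Bspline t p (ν + k + 1) x := by
          rw [Finset.sum_range_succ'
              (fun k => (x - t (ν + k)) / (t (ν + k + p + 1) - t (ν + k)) *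
                Bspline t p (ν + k) x) (p + 1),
            Finset.sum_range_succ
              (fun k => (t (ν + k + p + 2) - x) / (t (ν + k + p + 2) - t (ν + k + 1)) *
                Bspline t p (ν + k + 1) x) (p + 1)]
          simp only [Nat.add_zero]
          have hb1 : Bspline t p ν x = 0 :=
            Bspline_zero_right t ht p ν x
              (le_trans (hmt (by omega : ν + p + 1 ≤ ν + (p + 1))) h1)
          have hb2 : Bspline t p (ν + (p + 1) + 1) x = 0 :=
            Bspline_zero_left t ht p (ν + (p + 1) + 1) x
              (lt_of_lt_of_le h2 (hmt (by omega)))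
          rw [hb1, hb2, mul_zero, mul_zero, add_zero, add_zero]
          congr 1
          refine Finset.sum_congr rfl (fun k _ => ?_)
          rw [show ν + (k + 1) = ν + k + 1 from by omega,
            show ν + k + 1 + p + 1 = ν + k + p + 2 from by omega]
      _ = ∑ k ∈ Finset.range (p + 1), Bspline t p (ν + k + 1) x := by
          rw [← Finset.sum_add_distrib]
          refine Finset.sum_congr rfl (fun k _ => ?_)
          rcases eq_or_lt_of_le (hmt (show ν + k + 1 ≤ ν + k + p + 2 from by omega))
            with heq | hlt
          · have hB : Bspline t p (ν + k + 1) x = 0 := by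
              rcases lt_or_ge x (t (ν + k + 1)) with h | h
              · exact Bspline_zero_left t ht p _ x h
              · exact Bspline_zero_right t ht p _ x
                  (by rw [show ν + k + 1 + p + 1 = ν + k + p + 2 from by omega, ← heq]
                      exact h)
            rw [hB, mul_zero, mul_zero, add_zero]
          · rw [← add_mul, ← add_div,
              show x - t (ν + k + 1) + (t (ν + k + p + 2) - x)
                = t (ν + k + p + 2) - t (ν + k + 1) from by ring,
              div_self (by linarith), one_mul]
      _ = 1 := by
          have := IH (ν + 1) x (by rw [show ν + 1 + p = ν + p + 1 from by omega]
                                   exact h1)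
            (by rw [show ν + 1 + p + 1 = ν + (p + 1) + 1 from by omega]; exact h2)
          rw [sum_Icc_shift] at this
          rw [← this]
          exact Finset.sum_congr rfl (fun k _ => by
            rw [show ν + k + 1 = ν + 1 + k from by omega])

/-- **Local bounds for the univariate wQISA.** For `x ∈ [x_μ, x_{μ+1})` with
`p+1 ≤ μ ≤ n`, the wQISA value is bounded by the extrema `α(μ) = min` and
`β(μ) = max` of the `y`-values of the points of `P_μ`; moreover
`α(μ), β(μ) ∈ [ymin, ymax]` whenever `ymin ≤ y ≤ ymax` on all of `P`. -/
theorem wQISA_local_bounds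
    (P : Finset (ℝ × ℝ)) (p n : ℕ) (hp : 0 < p) (t : ℕ → ℝ) (a b : ℝ)
    -- the knot vector is non-decreasing
    (hmono : ∀ j, 1 ≤ j → j ≤ n + p → t j ≤ t (j + 1))
    -- `(p+1)`-regularity
    (hn : p + 1 ≤ n)
    (hreg1 : t 1 = t (p + 1)) (hreg2 : t (n + 1) = t (n + p + 1))
    (hreg3 : ∀ j, 1 ≤ j → j ≤ n → t j < t (j + p + 1))
    -- boundary knots
    (ha : t (p + 1) = a) (hb : t (n + 1) = b)
    -- nonnegative weight family with positive total weight at every knot average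
    (w : ℝ → ℝ → ℝ) (hw : ∀ u x, 0 ≤ w u x)
    (hpos : ∀ i ∈ Finset.Icc 1 n, 0 < ∑ q ∈ P, w (knotAvg t p i) q.1)
    (μ : ℕ) (hμ1 : p + 1 ≤ μ) (hμ2 : μ ≤ n)
    (x : ℝ) (hx1 : t μ ≤ x) (hx2 : x < t (μ + 1)) :
    (sInf (PmuY P t w p μ) ≤ wQISA P p n t w x ∧
      wQISA P p n t w x ≤ sSup (PmuY P t w p μ)) ∧
    ∀ ymin ymax : ℝ, (∀ q ∈ P, ymin ≤ q.2 ∧ q.2 ≤ ymax) →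
      ymin ≤ sInf (PmuY P t w p μ) ∧ sSup (PmuY P t w p μ) ≤ ymax := by
  -- a globally defined monotone extension of `t`
  set t' : ℕ → ℝ := fun j => t (max 1 (min j (n + p + 1))) with ht'def
  have hmono' : ∀ a b : ℕ, 1 ≤ a → a ≤ b → b ≤ n + p + 1 → t a ≤ t b := by
    intro a b ha hab hb
    induction b with
    | zero => omega
    | succ b ih =>
      rcases eq_or_lt_of_le hab with rfl | h
      · exact le_rfl
      · exact le_trans (ih (by omega) (by omega)) (hmono b (by omega) (by omega))
  have ht'step : ∀ j, t' j ≤ t' (j + 1) := by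
    intro j
    simp only [ht'def]
    exact hmono' _ _ (by omega) (by omega) (by omega)
  have hmt' : Monotone t' := monotone_nat_of_le_succ ht'step
  have hagree : ∀ j, 1 ≤ j → j ≤ n + p + 1 → t' j = t j := by
    intro j h1 h2
    simp only [ht'def]
    congr 1
    omega
  have hBeq : ∀ i, 1 ≤ i → i ≤ n → Bspline t p i x = Bspline t' p i x := by
    intro i h1 h2
    exact Bspline_congr t t' p i
      (fun j hj1 hj2 => (hagree j (by omega) (by omega)).symm) x
  have hxa : t' μ ≤ x := by rw [hagree μ (by omega) (by omega)]; exact hx1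
  have hxb : x < t' (μ + 1) := by rw [hagree (μ + 1) (by omega) (by omega)]; exact hx2
  -- finiteness / nonemptiness of the y-values of `P_μ`
  set S := PmuY P t w p μ with hSdef
  have hSsub : S ⊆ ↑(P.image Prod.snd) := by
    rintro y ⟨x', hxy, -⟩
    simp only [Finset.coe_image, Set.mem_image, Finset.mem_coe]
    exact ⟨(x', y), hxy, rfl⟩
  have hfin : S.Finite := Set.Finite.subset (P.image Prod.snd).finite_toSet hSsub
  have hbdb : BddBelow S := hfin.bddBelow
  have hbda : BddAbove S := hfin.bddAbove
  have hne : S.Nonempty := by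
    obtain ⟨q, hq, hqw⟩ : ∃ q ∈ P, w (knotAvg t p μ) q.1 ≠ 0 := by
      by_contra hcon
      push_neg at hcon
      have := hpos μ (by simp only [Finset.mem_Icc]; omega)
      rw [Finset.sum_eq_zero (fun q hq => hcon q hq)] at this
      exact lt_irrefl 0 this
    exact ⟨q.2, q.1, by simpa using hq, μ, by omega, le_rfl, hqw⟩
  -- control point bounds
  have hctrl : ∀ i, μ - p ≤ i → i ≤ μ →
      sInf S ≤ ctrlEst P w (knotAvg t p i) ∧ ctrlEst P w (knotAvg t p i) ≤ sSup S := by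
    intro i hi1 hi2
    have hwpos := hpos i (by simp only [Finset.mem_Icc]; omega)
    have hmem : ∀ q ∈ P, w (knotAvg t p i) q.1 ≠ 0 → q.2 ∈ S := by
      intro q hq hqw
      exact ⟨q.1, by simpa using hq, i, hi1, hi2, hqw⟩
    constructor
    · rw [ctrlEst, le_div_iff₀ hwpos, Finset.mul_sum]
      refine Finset.sum_le_sum (fun q hq => ?_)
      by_cases hz : w (knotAvg t p i) q.1 = 0
      · rw [hz, mul_zero, mul_zero]
      · exact mul_le_mul_of_nonneg_right (csInf_le hbdb (hmem q hq hz)) (hw _ _)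
    · rw [ctrlEst, div_le_iff₀ hwpos, Finset.mul_sum]
      refine Finset.sum_le_sum (fun q hq => ?_)
      by_cases hz : w (knotAvg t p i) q.1 = 0
      · rw [hz, mul_zero, mul_zero]
      · exact mul_le_mul_of_nonneg_right (le_csSup hbda (hmem q hq hz)) (hw _ _)
  -- reduce the spline sum to the active indices
  have hsub : Finset.Icc (μ - p) μ ⊆ Finset.Icc 1 n := by
    intro i hi
    simp only [Finset.mem_Icc] at *
    omega
  have hvanish : ∀ i ∈ Finset.Icc 1 n, i ∉ Finset.Icc (μ - p) μ →
      ctrlEst P w (knotAvg t p i) * Bspline t' p i x = 0 := by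
    intro i hi hni
    simp only [Finset.mem_Icc] at hi hni
    have hB : Bspline t' p i x = 0 := by
      rcases lt_or_ge i (μ - p) with hcase | hcase
      · refine Bspline_zero_right t' ht'step p i x ?_
        exact le_trans (hmt' (show i + p + 1 ≤ μ from by omega)) hxa
      · have hiμ : μ < i := by omega
        refine Bspline_zero_left t' ht'step p i x ?_
        exact lt_of_lt_of_le hxb (hmt' (by omega))
    rw [hB, mul_zero]
  have hsum : wQISA P p n t w x =
      ∑ i ∈ Finset.Icc (μ - p) μ, ctrlEst P w (knotAvg t p i) * Bspline t' p i x := by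
    rw [wQISA]
    rw [Finset.sum_congr rfl (fun i hi => by
      simp only [Finset.mem_Icc] at hi
      rw [hBeq i hi.1 hi.2])]
    exact (Finset.sum_subset hsub hvanish).symm
  -- partition of unity on the active interval
  have hpart : ∑ i ∈ Finset.Icc (μ - p) μ, Bspline t' p i x = 1 := by
    have h := Bspline_partition t' ht'step p (μ - p) x
      (by rw [show μ - p + p = μ from by omega]; exact hxa)
      (by rw [show μ - p + p + 1 = μ + 1 from by omega]; exact hxb)
    rwa [show μ - p + p = μ from by omega] at h
  have hBnn : ∀ i, 0 ≤ Bspline t' p i x := fun i => Bspline_nonneg t' ht'step p i x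
  refine ⟨⟨?_, ?_⟩, ?_⟩
  · rw [hsum]
    calc sInf S = ∑ i ∈ Finset.Icc (μ - p) μ, sInf S * Bspline t' p i x := by
          rw [← Finset.mul_sum, hpart, mul_one]
      _ ≤ ∑ i ∈ Finset.Icc (μ - p) μ, ctrlEst P w (knotAvg t p i) * Bspline t' p i x := by
          refine Finset.sum_le_sum (fun i hi => ?_)
          simp only [Finset.mem_Icc] at hi
          exact mul_le_mul_of_nonneg_right (hctrl i hi.1 hi.2).1 (hBnn i)
  · rw [hsum]
    calc ∑ i ∈ Finset.Icc (μ - p) μ, ctrlEst P w (knotAvg t p i) * Bspline t' p i x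
        ≤ ∑ i ∈ Finset.Icc (μ - p) μ, sSup S * Bspline t' p i x := by
          refine Finset.sum_le_sum (fun i hi => ?_)
          simp only [Finset.mem_Icc] at hi
          exact mul_le_mul_of_nonneg_right (hctrl i hi.1 hi.2).2 (hBnn i)
      _ = sSup S := by rw [← Finset.mul_sum, hpart, mul_one]
  · intro ymin ymax hY
    constructor
    · refine le_csInf hne ?_
      rintro y ⟨x', hxy, -⟩
      exact (hY _ hxy).1
    · refine csSup_le hne ?_
      rintro y ⟨x', hxy, -⟩
      exact (hY _ hxy).2
end

section
/- Consider the regression model Y_i = f(X_{i,1}, X_{i,2}) + ε_i, i = 1,…,N, with fixed (nonrandom) design points (X_{i,1}, X_{i,2}) ∈ ℝ², where the errors ε_i are independent, identically distributed real random variables with mean 0 and finite variance σ_ε². Let B_1,…,B_m : ℝ² → [0,1] be nonnegative functions forming a partition of unity at the evaluation point (X_1,X_2), and for each j = 1,…,m let w_j : ℝ² → [0,∞) be a weight function with Σ_{i=1}^N w_j(X_{i,1},X_{i,2}) > 0, and define the coefficient estimator ĉ_j := (Σ_{i=1}^N Y_i·w_j(X_{i,1},X_{i,2})) / (Σ_{i=1}^N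 w_j(X_{i,1},X_{i,2})). Then the estimator f̂_w(X_1,X_2) := Σ_{j=1}^m ĉ_j·B_j(X_1,X_2) satisfies Var[f̂_w(X_1,X_2)] ≤ σ_ε². -/
open MeasureTheory ProbabilityTheory

lemma my_variance_const_add {Ω : Type*} [MeasurableSpace Ω] (μ : Measure Ω)
    [IsProbabilityMeasure μ] (C : ℝ) (Z : Ω → ℝ) (hZ : Integrable Z μ) :
    variance (fun ω => C + Z ω) μ = variance Z μ := by
  have h : μ[fun ω => C + Z ω] = C + μ[Z] := by
    rw [integral_add (integrable_const C) hZ]; simp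
  unfold ProbabilityTheory.variance ProbabilityTheory.evariance
  rw [h]
  congr 1
  refine lintegral_congr fun ω => ?_
  congr 2
  ring

/-- **Variance bound for the wQISA estimator.** In the fixed-design regression model
`Y_i = f(X_i) + ε_i` with i.i.d. errors of mean `0` and finite variance `σε2`, the
wQISA estimator `f̂_w(X₀) = ∑_j ĉ_j B_j(X₀)`, with coefficient estimators
`ĉ_j = (∑_i Y_i w_j(X_i)) / (∑_i w_j(X_i))` and `B_j : ℝ² → [0,1]` forming a
partition of unity at `X₀`, satisfies `Var[f̂_w(X₀)] ≤ σε2`. -/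
theorem wQISA_variance_le
    {Ω : Type*} [MeasurableSpace Ω] (μ : Measure Ω) [IsProbabilityMeasure μ]
    (N m : ℕ) (X : Fin N → ℝ × ℝ) (f : ℝ × ℝ → ℝ) (σε2 : ℝ)
    -- the errors: independent, identically distributed, mean 0, variance σε2
    (ε : Fin N → Ω → ℝ)
    (hmeas : ∀ i, Measurable (ε i))
    (hindep : iIndepFun ε μ)
    (hident : ∀ i j, IdentDistrib (ε i) (ε j) μ μ)
    (hL2 : ∀ i, MemLp (ε i) 2 μ)
    (hmean : ∀ i, μ[ε i] = 0)
    (hvar : ∀ i, variance (ε i) μ = σε2)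
    -- the observations
    (Y : Fin N → Ω → ℝ) (hY : ∀ i ω, Y i ω = f (X i) + ε i ω)
    -- nonnegative functions with values in [0,1] forming a partition of unity at X₀
    (B : Fin m → ℝ × ℝ → ℝ) (X₀ : ℝ × ℝ)
    (hB0 : ∀ j v, 0 ≤ B j v) (hB1 : ∀ j v, B j v ≤ 1)
    (hpart : ∑ j, B j X₀ = 1)
    -- nonnegative weight functions with positive total weight on the design points
    (w : Fin m → ℝ × ℝ → ℝ) (hw : ∀ j v, 0 ≤ w j v)
    (hwpos : ∀ j, 0 < ∑ i, w j (X i))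
    -- the coefficient estimators and the wQISA estimator at X₀
    (c : Fin m → Ω → ℝ)
    (hc : ∀ j ω, c j ω = (∑ i, Y i ω * w j (X i)) / (∑ i, w j (X i)))
    (fhat : Ω → ℝ) (hfhat : ∀ ω, fhat ω = ∑ j, c j ω * B j X₀) :
    variance fhat μ ≤ σε2 := by
  classical
  -- coefficients
  set a : Fin N → ℝ := fun i => ∑ j, B j X₀ * (w j (X i) / (∑ i', w j (X i'))) with ha
  have ha0 : ∀ i, 0 ≤ a i := fun i =>
    Finset.sum_nonneg fun j _ => mul_nonneg (hB0 j X₀)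
      (div_nonneg (hw j (X i)) (le_of_lt (hwpos j)))
  have hasum : ∑ i, a i = 1 := by
    rw [Finset.sum_comm]
    calc ∑ j, ∑ i, B j X₀ * (w j (X i) / (∑ i', w j (X i')))
        = ∑ j, B j X₀ := by
          refine Finset.sum_congr rfl fun j _ => ?_
          rw [← Finset.mul_sum, ← Finset.sum_div, div_self (ne_of_gt (hwpos j)), mul_one]
      _ = 1 := hpart
  have ha1 : ∀ i, a i ≤ 1 := by
    intro i
    calc a i ≤ ∑ i', a i' := Finset.single_le_sum (fun i' _ => ha0 i') (Finset.mem_univ i)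
      _ = 1 := hasum
  set C : ℝ := ∑ j, ((∑ i, f (X i) * w j (X i)) / (∑ i', w j (X i'))) * B j X₀ with hC
  set Z : Ω → ℝ := fun ω => ∑ i, a i * ε i ω with hZ
  have hrepr : fhat = fun ω => C + Z ω := by
    funext ω
    rw [hfhat, hC, hZ]
    simp only [hc, hY]
    have : ∀ j : Fin m,
        ((∑ i, (f (X i) + ε i ω) * w j (X i)) / (∑ i', w j (X i'))) * B j X₀ =
        ((∑ i, f (X i) * w j (X i)) / (∑ i', w j (X i'))) * B j X₀ +
        ∑ i, (B j X₀ * (w j (X i) / (∑ i', w j (X i')))) * ε i ω := by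
      intro j
      simp only [add_mul, Finset.sum_add_distrib, add_div, Finset.sum_div, Finset.mul_sum,
        Finset.sum_mul]
      congr 1
      refine Finset.sum_congr rfl fun i _ => ?_
      field_simp
    rw [Finset.sum_congr rfl fun j _ => this j, Finset.sum_add_distrib]
    congr 1
    rw [Finset.sum_comm]
    refine Finset.sum_congr rfl fun i _ => ?_
    rw [ha, Finset.sum_mul]
  have hZi : ∀ i : Fin N, MemLp (fun ω => a i * ε i ω) 2 μ := fun i =>
    (hL2 i).const_mul (a i)
  have hZint : Integrable Z μ := by
    refine integrable_finset_sum _ fun i _ => ?_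
    exact ((hL2 i).integrable one_le_two).const_mul (a i)
  rw [hrepr, my_variance_const_add μ C Z hZint]
  have hvarZ : variance Z μ = ∑ i, a i ^ 2 * σε2 := by
    have hsum : Z = ∑ i, fun ω => a i * ε i ω := by
      funext ω; simp [hZ]
    rw [hsum, IndepFun.variance_sum (fun i _ => hZi i) ?_]
    · exact Finset.sum_congr rfl fun i _ => by rw [variance_const_mul, hvar i]
    · intro i _ j _ hij
      exact ((hindep.indepFun hij).comp (measurable_const_mul (a i))
        (measurable_const_mul (a j)))
  rw [hvarZ]
  have hσ : 0 ≤ σε2 := by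
    have hm0 : m ≠ 0 := by
      intro h; subst h
      simp at hpart
    have hN0 : N ≠ 0 := by
      intro h; subst h
      have := hwpos ⟨0, Nat.pos_of_ne_zero hm0⟩
      simp at this
    have := hvar ⟨0, Nat.pos_of_ne_zero hN0⟩
    rw [← this]
    exact variance_nonneg _ _
  calc ∑ i, a i ^ 2 * σε2 = (∑ i, a i ^ 2) * σε2 := by rw [Finset.sum_mul]
    _ ≤ 1 * σε2 := by
        refine mul_le_mul_of_nonneg_right ?_ hσ
        calc ∑ i, a i ^ 2 ≤ ∑ i, a i := by
              refine Finset.sum_le_sum fun i _ => ?_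
              nlinarith [ha0 i, ha1 i]
          _ = 1 := hasum
    _ = σε2 := one_mul _
end

section
/- Consider the regression model Y_i = f(X_{i,1}, X_{i,2}) + ε_i, i = 1,…,N, with fixed design points and i.i.d. errors ε_i with mean 0. Let B_1,…,B_m : ℝ² → [0,1] be nonnegative functions that form a partition of unity at the evaluation point (X_1,X_2), and for each j let w_j : ℝ² → [0,∞) be a weight function with positive total weight over the design points, with coefficient estimators ĉ_j := (Σ_i Y_i·w_j(X_{i,1},X_{i,2})) / (Σ_i w_j(X_{i,1},X_{i,2})) and f̂_w(X_1,X_2) := Σ_j ĉ_j·B_j(X_1,X_2). Let I := ⋃_{j : B_j(X_1,X_2) ≠ 0} { i : w_j(X_{i,1},X_{i,2}) ≠ 0 } be the set of design indices effectively contributing at (X_1,X_2). Then α ≤ E[f̂_w(X_1,X_2)] ≤ β, where α := min_{i ∈ I} f(X_{i,1},X_{i,2}) and β := max_{i ∈ I} f(X_{i,1},X_{i,2}). -/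
open MeasureTheory ProbabilityTheory

/-- **Bounds on the expectation of the wQISA estimator.** In the fixed-design
regression model `Y_i = f(X_i) + ε_i` with i.i.d. errors of mean `0`, the wQISA
estimator `f̂_w(X₀) = ∑_j ĉ_j B_j(X₀)` satisfies `α ≤ E[f̂_w(X₀)] ≤ β`, where `α` and
`β` are the minimum and maximum of `f(X_i)` over the design indices effectively
contributing at `X₀`, i.e. `I = ⋃_{j : B_j(X₀) ≠ 0} { i : w_j(X_i) ≠ 0 }`. -/
theorem wQISA_mean_bounds
    {Ω : Type*} [MeasurableSpace Ω] (μ : Measure Ω) [IsProbabilityMeasure μ]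
    (N m : ℕ) (X : Fin N → ℝ × ℝ) (f : ℝ × ℝ → ℝ)
    -- the errors: independent, identically distributed, integrable with mean 0
    (ε : Fin N → Ω → ℝ)
    (hmeas : ∀ i, Measurable (ε i))
    (hindep : iIndepFun ε μ)
    (hident : ∀ i j, IdentDistrib (ε i) (ε j) μ μ)
    (hint : ∀ i, Integrable (ε i) μ)
    (hmean : ∀ i, μ[ε i] = 0)
    -- the observations
    (Y : Fin N → Ω → ℝ) (hY : ∀ i ω, Y i ω = f (X i) + ε i ω)
    -- nonnegative functions with values in [0,1] forming a partition of unity at X₀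
    (B : Fin m → ℝ × ℝ → ℝ) (X₀ : ℝ × ℝ)
    (hB0 : ∀ j v, 0 ≤ B j v) (hB1 : ∀ j v, B j v ≤ 1)
    (hpart : ∑ j, B j X₀ = 1)
    -- nonnegative weight functions with positive total weight on the design points
    (w : Fin m → ℝ × ℝ → ℝ) (hw : ∀ j v, 0 ≤ w j v)
    (hwpos : ∀ j, 0 < ∑ i, w j (X i))
    -- the coefficient estimators and the wQISA estimator at X₀
    (c : Fin m → Ω → ℝ)
    (hc : ∀ j ω, c j ω = (∑ i, Y i ω * w j (X i)) / (∑ i, w j (X i)))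
    (fhat : Ω → ℝ) (hfhat : ∀ ω, fhat ω = ∑ j, c j ω * B j X₀) :
    sInf ((fun i => f (X i)) '' {i | ∃ j, B j X₀ ≠ 0 ∧ w j (X i) ≠ 0}) ≤ μ[fhat] ∧
    μ[fhat] ≤ sSup ((fun i => f (X i)) '' {i | ∃ j, B j X₀ ≠ 0 ∧ w j (X i) ≠ 0}) := by

  classical
  set T : Set ℝ := (fun i => f (X i)) '' {i | ∃ j, B j X₀ ≠ 0 ∧ w j (X i) ≠ 0} with hT
  have hTfin : T.Finite := Set.Finite.image _ (Set.toFinite _)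
  -- T is nonempty
  have hTne : T.Nonempty := by
    have h1 : ∃ j, B j X₀ ≠ 0 := by
      by_contra h
      push_neg at h
      simp [h] at hpart
    obtain ⟨j, hj⟩ := h1
    have h2 : ∃ i, w j (X i) ≠ 0 := by
      by_contra h
      push_neg at h
      have := hwpos j
      rw [Finset.sum_eq_zero (fun i _ => h i)] at this
      exact lt_irrefl 0 this
    obtain ⟨i, hi⟩ := h2
    exact ⟨f (X i), ⟨i, ⟨j, hj, hi⟩, rfl⟩⟩
  have hbdd_below : BddBelow T := hTfin.bddBelow
  have hbdd_above : BddAbove T := hTfin.bddAbove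
  -- Integrability of Y i and expectation
  have hYint : ∀ i, Integrable (Y i) μ := by
    intro i
    have : Y i = fun ω => f (X i) + ε i ω := funext (hY i)
    rw [this]
    exact (integrable_const _).add (hint i)
  have hEY : ∀ i, μ[Y i] = f (X i) := by
    intro i
    have : Y i = fun ω => f (X i) + ε i ω := funext (hY i)
    rw [this, integral_add (integrable_const _) (hint i), hmean i, integral_const]
    simp
  have hcint : ∀ j, Integrable (c j) μ := by
    intro j
    have : c j = fun ω => (∑ i, Y i ω * w j (X i)) * (∑ i, w j (X i))⁻¹ := by
      funext ω; rw [hc j ω, div_eq_mul_inv]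
    rw [this]
    exact (integrable_finset_sum _ (fun i _ => (hYint i).mul_const _)).mul_const _
  have hEc : ∀ j, μ[c j] = (∑ i, f (X i) * w j (X i)) / (∑ i, w j (X i)) := by
    intro j
    have h1 : c j = fun ω => (∑ i, Y i ω * w j (X i)) * (∑ i, w j (X i))⁻¹ := by
      funext ω; rw [hc j ω, div_eq_mul_inv]
    rw [h1, integral_mul_const, integral_finset_sum _ (fun i _ => (hYint i).mul_const _)]
    rw [div_eq_mul_inv]
    congr 1
    exact Finset.sum_congr rfl fun i _ => by rw [integral_mul_const, hEY i]
  have hEf : μ[fhat] = ∑ j, ((∑ i, f (X i) * w j (X i)) / (∑ i, w j (X i))) * B j X₀ := by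
    have h1 : fhat = fun ω => ∑ j, c j ω * B j X₀ := funext hfhat
    rw [h1, integral_finset_sum _ (fun j _ => (hcint j).mul_const _)]
    exact Finset.sum_congr rfl fun j _ => by rw [integral_mul_const, hEc j]
  -- per-coefficient bounds
  have hkey : ∀ j, B j X₀ ≠ 0 →
      sInf T ≤ (∑ i, f (X i) * w j (X i)) / (∑ i, w j (X i)) ∧
      (∑ i, f (X i) * w j (X i)) / (∑ i, w j (X i)) ≤ sSup T := by
    intro j hj
    constructor
    · rw [le_div_iff₀ (hwpos j), Finset.mul_sum]
      refine Finset.sum_le_sum fun i _ => ?_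
      rcases eq_or_ne (w j (X i)) 0 with h | h
      · simp [h]
      · have hmem : f (X i) ∈ T := ⟨i, ⟨j, hj, h⟩, rfl⟩
        exact mul_le_mul_of_nonneg_right (csInf_le hbdd_below hmem) (hw j (X i))
    · rw [div_le_iff₀ (hwpos j), Finset.mul_sum]
      refine Finset.sum_le_sum fun i _ => ?_
      rcases eq_or_ne (w j (X i)) 0 with h | h
      · simp [h]
      · have hmem : f (X i) ∈ T := ⟨i, ⟨j, hj, h⟩, rfl⟩
        exact mul_le_mul_of_nonneg_right (le_csSup hbdd_above hmem) (hw j (X i))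
  rw [hEf]
  constructor
  · calc sInf T = ∑ j, sInf T * B j X₀ := by
          rw [← Finset.mul_sum, hpart, mul_one]
      _ ≤ ∑ j, ((∑ i, f (X i) * w j (X i)) / (∑ i, w j (X i))) * B j X₀ := by
          refine Finset.sum_le_sum fun j _ => ?_
          rcases eq_or_ne (B j X₀) 0 with h | h
          · simp [h]
          · exact mul_le_mul_of_nonneg_right (hkey j h).1 (hB0 j X₀)
  · calc ∑ j, ((∑ i, f (X i) * w j (X i)) / (∑ i, w j (X i))) * B j X₀
        ≤ ∑ j, sSup T * B j X₀ := by
          refine Finset.sum_le_sum fun j _ => ?_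
          rcases eq_or_ne (B j X₀) 0 with h | h
          · simp [h]
          · exact mul_le_mul_of_nonneg_right (hkey j h).2 (hB0 j X₀)
      _ = sSup T := by rw [← Finset.mul_sum, hpart, mul_one]
end
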